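/- Let f : (a, b) → ℝ be continuous. Then f is convex on (a, b) if and only if the specular derivative f^♮ exists at every point of (a, b) and is monotonically increasing on (a, b). -/

import Mathlib

open Set

open Filter Topology

noncomputable def A (α β : ℝ) : ℝ :=
  (α * β - 1 + Real.sqrt ((α ^ 2 + 1) * (β ^ 2 + 1))) / (α + β)

/-- `f` is specularly differentiable at `x`: both one-sided derivatives exist. -/
def SpecularDifferentiableAt (f : ℝ → ℝ) (x : ℝ) : Prop :=
  DifferentiableWithinAt ℝ f (Ici x) x ∧ DifferentiableWithinAt ℝ f (Iic x) x

/-- The specular derivative of `f` at `x`, in terms of the right-hand derivative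
`α = f'₊(x)` and the left-hand derivative `β = f'₋(x)`. -/
noncomputable def specDeriv (f : ℝ → ℝ) (x : ℝ) : ℝ :=
  let α := derivWithin f (Ici x) x
  let β := derivWithin f (Iic x) x
  if α + β = 0 then 0 else A α β


lemma A_le_of_le {α β : ℝ} (h : β ≤ α) (hs : α + β ≠ 0) : A α β ≤ α := by
  rcases hs.lt_or_gt with hneg | hpos
  · have hb : β < 0 := by linarith
    have h2 : α ^ 2 ≤ β ^ 2 := by nlinarith
    have hsq : α ^ 2 + 1 ≤ Real.sqrt ((α ^ 2 + 1) * (β ^ 2 + 1)) := by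
      have h3 : (α ^ 2 + 1) ^ 2 ≤ (α ^ 2 + 1) * (β ^ 2 + 1) := by nlinarith
      calc α ^ 2 + 1 = Real.sqrt ((α ^ 2 + 1) ^ 2) := (Real.sqrt_sq (by positivity)).symm
        _ ≤ _ := Real.sqrt_le_sqrt h3
    rw [A, div_le_iff_of_neg hneg]
    nlinarith
  · have ha : 0 < α := by linarith
    have h2 : β ^ 2 ≤ α ^ 2 := by nlinarith
    have hsq : Real.sqrt ((α ^ 2 + 1) * (β ^ 2 + 1)) ≤ α ^ 2 + 1 := by
      have h3 : (α ^ 2 + 1) * (β ^ 2 + 1) ≤ (α ^ 2 + 1) ^ 2 := by nlinarith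
      calc Real.sqrt ((α ^ 2 + 1) * (β ^ 2 + 1)) ≤ Real.sqrt ((α ^ 2 + 1) ^ 2) :=
            Real.sqrt_le_sqrt h3
        _ = α ^ 2 + 1 := Real.sqrt_sq (by positivity)
    rw [A, div_le_iff₀ hpos]
    nlinarith

lemma le_A_of_le {α β : ℝ} (h : β ≤ α) (hs : α + β ≠ 0) : β ≤ A α β := by
  rcases hs.lt_or_gt with hneg | hpos
  · have hb : β < 0 := by linarith
    have h2 : α ^ 2 ≤ β ^ 2 := by nlinarith
    have hsq : Real.sqrt ((α ^ 2 + 1) * (β ^ 2 + 1)) ≤ β ^ 2 + 1 := by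
      have h3 : (α ^ 2 + 1) * (β ^ 2 + 1) ≤ (β ^ 2 + 1) ^ 2 := by nlinarith
      calc Real.sqrt ((α ^ 2 + 1) * (β ^ 2 + 1)) ≤ Real.sqrt ((β ^ 2 + 1) ^ 2) :=
            Real.sqrt_le_sqrt h3
        _ = β ^ 2 + 1 := Real.sqrt_sq (by positivity)
    rw [A, le_div_iff_of_neg hneg]
    nlinarith
  · have ha : 0 < α := by linarith
    have h2 : β ^ 2 ≤ α ^ 2 := by nlinarith
    have hsq : β ^ 2 + 1 ≤ Real.sqrt ((α ^ 2 + 1) * (β ^ 2 + 1)) := by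
      have h3 : (β ^ 2 + 1) ^ 2 ≤ (α ^ 2 + 1) * (β ^ 2 + 1) := by nlinarith
      calc β ^ 2 + 1 = Real.sqrt ((β ^ 2 + 1) ^ 2) := (Real.sqrt_sq (by positivity)).symm
        _ ≤ _ := Real.sqrt_le_sqrt h3
    rw [A, le_div_iff₀ hpos]
    nlinarith

lemma A_self {α : ℝ} (hs : α + α ≠ 0) : A α α = α := by
  have ha : α ≠ 0 := fun h => hs (by rw [h]; ring)
  have : Real.sqrt ((α ^ 2 + 1) * (α ^ 2 + 1)) = α ^ 2 + 1 :=
    Real.sqrt_mul_self (by positivity)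
  rw [A, this, div_eq_iff hs]; ring


/-- bounds on specDeriv in terms of the one-sided derivatives, when left ≤ right. -/
lemma specDeriv_le_right {f : ℝ → ℝ} {x : ℝ}
    (h : derivWithin f (Iic x) x ≤ derivWithin f (Ici x) x) :
    specDeriv f x ≤ derivWithin f (Ici x) x := by
  rw [specDeriv]
  split_ifs with hs
  · linarith
  · exact A_le_of_le h hs

lemma left_le_specDeriv {f : ℝ → ℝ} {x : ℝ}
    (h : derivWithin f (Iic x) x ≤ derivWithin f (Ici x) x) :
    derivWithin f (Iic x) x ≤ specDeriv f x := by
  rw [specDeriv]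
  split_ifs with hs
  · linarith
  · exact le_A_of_le h hs

/-- At a point where the one-sided derivatives agree, specDeriv is the derivative. -/
lemma specDeriv_eq_of_eq {f : ℝ → ℝ} {x : ℝ}
    (h : derivWithin f (Iic x) x = derivWithin f (Ici x) x) :
    specDeriv f x = derivWithin f (Ici x) x := by
  rw [specDeriv]
  split_ifs with hs
  · rw [h] at hs
    linarith
  · rw [h] at hs ⊢
    exact A_self hs

lemma hasDerivAt_of_specular {f : ℝ → ℝ} {x : ℝ} (hd : SpecularDifferentiableAt f x)
    (h : derivWithin f (Iic x) x = derivWithin f (Ici x) x) :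
    HasDerivAt f (derivWithin f (Ici x) x) x := by
  have h1 : HasDerivWithinAt f (derivWithin f (Ici x) x) (Ici x) x := hd.1.hasDerivWithinAt
  have h2 : HasDerivWithinAt f (derivWithin f (Ici x) x) (Iic x) x := by
    rw [← h]; exact hd.2.hasDerivWithinAt
  have := h2.union h1
  rw [Iic_union_Ici] at this
  rwa [hasDerivWithinAt_univ] at this

/-- A convex function on an open interval is specularly differentiable. -/
lemma ConvexOn.specularDifferentiableAt {f : ℝ → ℝ} {a b x : ℝ}
    (hcv : ConvexOn ℝ (Ioo a b) f) (hx : x ∈ Ioo a b) : SpecularDifferentiableAt f x := by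
  have hax := hx.1
  have hxb := hx.2
  have hmono := hcv.slope_mono hx
  constructor
  · -- right derivative
    have hsub : Ioo x b ⊆ Ioo a b \ {x} := fun t ht =>
      ⟨⟨hax.trans ht.1, ht.2⟩, (ne_of_gt ht.1)⟩
    have hm : MonotoneOn (slope f x) (Ioo x b) := hmono.mono hsub
    obtain ⟨t₀, ht₀⟩ : (Ioo a x).Nonempty := nonempty_Ioo.2 hax
    have hbdd : BddBelow (slope f x '' Ioo x b) := by
      refine ⟨slope f x t₀, ?_⟩
      rintro _ ⟨t, ht, rfl⟩
      exact hmono ⟨⟨ht₀.1, ht₀.2.trans hxb⟩, ne_of_lt ht₀.2⟩ (hsub ht)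
        (ht₀.2.trans ht.1).le
    have := MonotoneOn.tendsto_nhdsWithin_Ioo_right (nonempty_Ioo.2 hxb) hm hbdd
    have hh : HasDerivWithinAt f (sInf (slope f x '' Ioo x b)) (Ioi x) x := by
      rw [hasDerivWithinAt_iff_tendsto_slope' (notMem_Ioi.2 le_rfl)]
      exact this
    exact (hasDerivWithinAt_Ioi_iff_Ici.1 hh).differentiableWithinAt
  · -- left derivative
    have hsub : Ioo a x ⊆ Ioo a b \ {x} := fun t ht =>
      ⟨⟨ht.1, ht.2.trans hxb⟩, (ne_of_lt ht.2)⟩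
    have hm : MonotoneOn (slope f x) (Ioo a x) := hmono.mono hsub
    obtain ⟨t₀, ht₀⟩ : (Ioo x b).Nonempty := nonempty_Ioo.2 hxb
    have hbdd : BddAbove (slope f x '' Ioo a x) := by
      refine ⟨slope f x t₀, ?_⟩
      rintro _ ⟨t, ht, rfl⟩
      exact hmono (hsub ht) ⟨⟨hax.trans ht₀.1, ht₀.2⟩, ne_of_gt ht₀.1⟩
        (ht.2.trans ht₀.1).le
    have := MonotoneOn.tendsto_nhdsWithin_Ioo_left (nonempty_Ioo.2 hax) hm hbdd
    have hh : HasDerivWithinAt f (sSup (slope f x '' Ioo a x)) (Iio x) x := by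
      rw [hasDerivWithinAt_iff_tendsto_slope' (notMem_Iio.2 le_rfl)]
      exact this
    exact (hasDerivWithinAt_Iio_iff_Iic.1 hh).differentiableWithinAt

theorem differentiableWithinAt_Iio_iff_Iic' {E : Type*} [NormedAddCommGroup E]
    [NormedSpace ℝ E] {f : ℝ → E} {x : ℝ} :
    DifferentiableWithinAt ℝ f (Iio x) x ↔ DifferentiableWithinAt ℝ f (Iic x) x :=
  ⟨fun h => (hasDerivWithinAt_Iio_iff_Iic.1 h.hasDerivWithinAt).differentiableWithinAt,
   fun h => (hasDerivWithinAt_Iio_iff_Iic.2 h.hasDerivWithinAt).differentiableWithinAt⟩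

theorem derivWithin_Iio_eq_Iic' {E : Type*} [NormedAddCommGroup E] [NormedSpace ℝ E] (f : ℝ → E)
    (x : ℝ) : derivWithin f (Iio x) x = derivWithin f (Iic x) x := by
  by_cases H : DifferentiableWithinAt ℝ f (Iio x) x
  · have A := (hasDerivWithinAt_Iio_iff_Iic.1 H.hasDerivWithinAt)
    have B := (differentiableWithinAt_Iio_iff_Iic'.1 H).hasDerivWithinAt
    simpa using (uniqueDiffOn_Iic x).eq self_mem_Iic A B
  · rw [derivWithin_zero_of_not_differentiableWithinAt H,
      derivWithin_zero_of_not_differentiableWithinAt]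
    rwa [differentiableWithinAt_Iio_iff_Iic'] at H

/-- For a convex function on an open interval, the left derivative is at most the right
derivative at every interior point. -/
lemma ConvexOn.left_deriv_le_right_deriv {f : ℝ → ℝ} {a b x : ℝ}
    (hcv : ConvexOn ℝ (Ioo a b) f)
    (hx : x ∈ Ioo a b)
    (hr : DifferentiableWithinAt ℝ f (Ici x) x) (hl : DifferentiableWithinAt ℝ f (Iic x) x) :
    derivWithin f (Iic x) x ≤ derivWithin f (Ici x) x := by
  have hax := hx.1
  have hxb := hx.2
  have hmono := hcv.slope_mono hx
  have htl : Tendsto (slope f x) (𝓝[<] x) (𝓝 (derivWithin f (Iic x) x)) := by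
    have := (hasDerivWithinAt_Iio_iff_Iic.2 hl.hasDerivWithinAt)
    rwa [hasDerivWithinAt_iff_tendsto_slope' (notMem_Iio.2 le_rfl)] at this
  have htr : Tendsto (slope f x) (𝓝[>] x) (𝓝 (derivWithin f (Ici x) x)) := by
    have := (hasDerivWithinAt_Ioi_iff_Ici.2 hr.hasDerivWithinAt)
    rwa [hasDerivWithinAt_iff_tendsto_slope' (notMem_Ioi.2 le_rfl)] at this
  have step1 : ∀ t'' ∈ Ioo x b, derivWithin f (Iic x) x ≤ slope f x t'' := by
    intro t'' ht''
    refine le_of_tendsto htl ?_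
    filter_upwards [Ioo_mem_nhdsLT hax] with t ht
    exact hmono ⟨⟨ht.1, ht.2.trans hxb⟩, ne_of_lt ht.2⟩
      ⟨⟨hax.trans ht''.1, ht''.2⟩, ne_of_gt ht''.1⟩ (ht.2.trans ht''.1).le
  refine ge_of_tendsto htr ?_
  filter_upwards [Ioo_mem_nhdsGT hxb] with t ht using step1 t ht

/-- If `F` is continuous on `[u,v]` and has a positive right derivative at every point of
`[u,v)` outside a countable set, then `F u ≤ F v`. -/
lemma mono_of_pos_right_deriv_off_countable {F : ℝ → ℝ} {u v : ℝ} (huv : u ≤ v)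
    (hc : ContinuousOn F (Icc u v)) {E : Set ℝ} (hE : E.Countable) {d : ℝ → ℝ}
    (hd : ∀ t ∈ Ico u v, t ∉ E → HasDerivWithinAt F (d t) (Ici t) t)
    (hpos : ∀ t ∈ Ico u v, t ∉ E → 0 < d t) : F u ≤ F v := by
  by_contra hlt
  push_neg at hlt
  have huv' : u < v := by
    rcases eq_or_lt_of_le huv with rfl | h
    · exact absurd hlt (lt_irrefl _)
    · exact h
  -- pick a level λ between F v and F u avoiding the (countable) image of E
  have hT : (F '' (E ∩ Icc u v)).Countable := (hE.mono inter_subset_left).image F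
  obtain ⟨lam, hlam, hlamT⟩ :
      ∃ lam ∈ Ioo (F v) (F u), lam ∉ F '' (E ∩ Icc u v) := by
    by_contra hcon
    push_neg at hcon
    have hsub : Ioo (F v) (F u) ⊆ F '' (E ∩ Icc u v) := fun t ht => hcon t ht
    have hcnt : (Ioo (F v) (F u)).Countable := hT.mono hsub
    have h1 : (Cardinal.mk (Ioo (F v) (F u))) ≤ Cardinal.aleph0 :=
      Cardinal.mk_le_aleph0_iff.2 (countable_coe_iff.2 hcnt)
    rw [Cardinal.mk_Ioo_real hlt] at h1
    exact absurd h1 (not_le.2 Cardinal.aleph0_lt_continuum)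
  -- the last point where F reaches λ
  set S : Set ℝ := Icc u v ∩ F ⁻¹' (Ici lam) with hS
  have hclosed : IsClosed S := hc.preimage_isClosed_of_isClosed isClosed_Icc isClosed_Ici
  have huS : u ∈ S := ⟨⟨le_rfl, huv⟩, le_of_lt hlam.2⟩
  have hbdd : BddAbove S := ⟨v, fun t ht => ht.1.2⟩
  set c := sSup S with hc'
  have hcS : c ∈ S := hclosed.csSup_mem ⟨u, huS⟩ hbdd
  have hcv : c < v := by
    rcases eq_or_lt_of_le hcS.1.2 with h | h
    · exfalso; have := hcS.2; rw [h] at this; exact absurd (lt_of_lt_of_le hlam.1 this) (lt_irrefl _)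
    · exact h
  have hFc : F c = lam := by
    by_contra hne
    have hlt2 : lam < F c := lt_of_le_of_ne hcS.2 (Ne.symm hne)
    have : lam ∈ Icc (F v) (F c) := ⟨hlam.1.le, hlt2.le⟩
    obtain ⟨t, ht, hFt⟩ :=
      intermediate_value_Icc' hcv.le (hc.mono (Icc_subset_Icc hcS.1.1 le_rfl)) this
    have htS : t ∈ S := ⟨⟨hcS.1.1.trans ht.1, ht.2⟩, hFt.ge⟩
    have htc : t ≤ c := le_csSup hbdd htS
    have : t = c := le_antisymm htc ht.1
    rw [this] at hFt
    exact hne hFt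
  have hcE : c ∉ E := fun hmem => hlamT ⟨c, ⟨hmem, hcS.1⟩, hFc⟩
  have hcIco : c ∈ Ico u v := ⟨hcS.1.1, hcv⟩
  have htend : Tendsto (slope F c) (𝓝[>] c) (𝓝 (d c)) := by
    have := hasDerivWithinAt_Ioi_iff_Ici.2 (hd c hcIco hcE)
    rwa [hasDerivWithinAt_iff_tendsto_slope' (notMem_Ioi.2 le_rfl)] at this
  have hev1 : ∀ᶠ t in 𝓝[>] c, 0 < slope F c t :=
    htend.eventually_const_lt (hpos c hcIco hcE)
  have hev2 : Ioc c v ∈ 𝓝[>] c := Ioc_mem_nhdsGT_of_mem ⟨le_rfl, hcv⟩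
  obtain ⟨t, hslope, htcv⟩ := (hev1.and (eventually_of_mem hev2 (fun t ht => ht))).exists
  have htc : c < t := htcv.1
  have hFt : lam < F t := by
    rw [slope_def_field, lt_div_iff₀ (sub_pos.2 htc)] at hslope
    rw [← hFc]
    linarith
  have htS : t ∈ S := ⟨⟨hcS.1.1.trans htc.le, htcv.2⟩, hFt.le⟩
  exact absurd (le_csSup hbdd htS) (not_le.2 htc)

/-- The set of points where the right derivative is strictly less than the left derivative
is countable (such points are strict local maxima of `f - q·id` for suitable rational `q`). -/
lemma countable_lt_kinks (f : ℝ → ℝ) (a b : ℝ)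
    (hd : ∀ x ∈ Ioo a b, SpecularDifferentiableAt f x) :
    {x | x ∈ Ioo a b ∧ derivWithin f (Ici x) x < derivWithin f (Iic x) x}.Countable := by
  set P : ℚ → ℚ → ℚ → Set ℝ := fun q r r' =>
    {x : ℝ | (r : ℝ) < x ∧ x < (r' : ℝ) ∧
      ∀ t ∈ Ioo (r : ℝ) (r' : ℝ), t ≠ x → f t - q * t < f x - q * x} with hP
  have hsub : ∀ q r r', (P q r r').Subsingleton := by
    intro q r r' x hx y hy
    by_contra hne
    have h1 := hx.2.2 y ⟨hy.1, hy.2.1⟩ (Ne.symm hne)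
    have h2 := hy.2.2 x ⟨hx.1, hx.2.1⟩ hne
    linarith
  have hunion :
      {x | x ∈ Ioo a b ∧ derivWithin f (Ici x) x < derivWithin f (Iic x) x} ⊆
        ⋃ q : ℚ, ⋃ r : ℚ, ⋃ r' : ℚ, P q r r' := by
    rintro x ⟨hx, hlt⟩
    obtain ⟨q, hq1, hq2⟩ := exists_rat_btwn hlt
    -- right side: slopes eventually < q
    have htr : Tendsto (slope f x) (𝓝[>] x) (𝓝 (derivWithin f (Ici x) x)) := by
      have := hasDerivWithinAt_Ioi_iff_Ici.2 (hd x hx).1.hasDerivWithinAt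
      rwa [hasDerivWithinAt_iff_tendsto_slope' (notMem_Ioi.2 le_rfl)] at this
    have hev1 : {t | slope f x t < (q : ℝ)} ∈ 𝓝[>] x := htr.eventually_lt_const hq1
    obtain ⟨u', hu', hIoo1⟩ := mem_nhdsGT_iff_exists_Ioo_subset.1 hev1
    obtain ⟨r', hr1', hr2'⟩ := exists_rat_btwn (show x < u' from hu')
    -- left side: slopes eventually > q
    have htl : Tendsto (slope f x) (𝓝[<] x) (𝓝 (derivWithin f (Iic x) x)) := by
      have := hasDerivWithinAt_Iio_iff_Iic.2 (hd x hx).2.hasDerivWithinAt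
      rwa [hasDerivWithinAt_iff_tendsto_slope' (notMem_Iio.2 le_rfl)] at this
    have hev2 : {t | (q : ℝ) < slope f x t} ∈ 𝓝[<] x := htl.eventually_const_lt hq2
    obtain ⟨l, hl, hIoo2⟩ := mem_nhdsLT_iff_exists_Ioo_subset.1 hev2
    obtain ⟨r, hr1, hr2⟩ := exists_rat_btwn (show l < x from hl)
    refine mem_iUnion.2 ⟨q, mem_iUnion.2 ⟨r, mem_iUnion.2 ⟨r', ⟨hr2, hr1', ?_⟩⟩⟩⟩
    intro t ht htne
    rcases htne.lt_or_gt with h | h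
    · -- t < x : use left control
      have : (q : ℝ) < slope f x t := hIoo2 ⟨hr1.trans ht.1, h⟩
      rw [slope_def_field, lt_div_iff_of_neg (sub_neg.2 h)] at this
      nlinarith
    · -- x < t : use right control
      have : slope f x t < (q : ℝ) := hIoo1 ⟨h, ht.2.trans hr2'⟩
      rw [slope_def_field, div_lt_iff₀ (sub_pos.2 h)] at this
      nlinarith
  refine Set.Countable.mono hunion ?_
  exact countable_iUnion fun q => countable_iUnion fun r => countable_iUnion fun r' =>
    (hsub q r r').countable

lemma countable_kinks (f : ℝ → ℝ) (a b : ℝ)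
    (hd : ∀ x ∈ Ioo a b, SpecularDifferentiableAt f x) :
    {x | x ∈ Ioo a b ∧ derivWithin f (Ici x) x ≠ derivWithin f (Iic x) x}.Countable := by
  have h1 := countable_lt_kinks f a b hd
  have h2 := countable_lt_kinks (fun t => -f t) a b
    (fun x hx => ⟨(hd x hx).1.neg, (hd x hx).2.neg⟩)
  refine Set.Countable.mono ?_ (h1.union h2)
  rintro x ⟨hx, hne⟩
  rcases hne.lt_or_gt with h | h
  · exact Or.inl ⟨hx, h⟩
  · refine Or.inr ⟨hx, ?_⟩
    have e1 : derivWithin (fun t => -f t) (Ici x) x = -derivWithin f (Ici x) x :=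
      derivWithin.neg
    have e2 : derivWithin (fun t => -f t) (Iic x) x = -derivWithin f (Iic x) x :=
      derivWithin.neg
    rw [e1, e2]
    exact neg_lt_neg h

lemma ConvexOn.specDeriv_monotoneOn {f : ℝ → ℝ} {a b : ℝ}
    (hcv : ConvexOn ℝ (Ioo a b) f) : MonotoneOn (specDeriv f) (Ioo a b) := by
  intro x hx y hy hxy
  rcases eq_or_lt_of_le hxy with rfl | hlt
  · exact le_rfl
  have hdx := hcv.specularDifferentiableAt hx
  have hdy := hcv.specularDifferentiableAt hy
  calc specDeriv f x ≤ derivWithin f (Ici x) x :=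
        specDeriv_le_right (hcv.left_deriv_le_right_deriv hx hdx.1 hdx.2)
    _ ≤ slope f x y := by
        rw [← derivWithin_Ioi_eq_Ici]
        exact hcv.rightDeriv_le_slope hx hy hlt
          (hdx.1.mono Ioi_subset_Ici_self)
    _ ≤ derivWithin f (Iic y) y := by
        rw [← derivWithin_Iio_eq_Iic']
        exact hcv.slope_le_leftDeriv hx hy hlt (hdy.2.mono Iio_subset_Iic_self)
    _ ≤ specDeriv f y :=
        left_le_specDeriv (hcv.left_deriv_le_right_deriv hy hdy.1 hdy.2)

lemma convexOn_of_specDeriv_monotoneOn (f : ℝ → ℝ) (a b : ℝ)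
    (hcont : ContinuousOn f (Ioo a b))
    (hd : ∀ x ∈ Ioo a b, SpecularDifferentiableAt f x)
    (hmono : MonotoneOn (specDeriv f) (Ioo a b)) : ConvexOn ℝ (Ioo a b) f := by
  set E := {x | x ∈ Ioo a b ∧ derivWithin f (Ici x) x ≠ derivWithin f (Iic x) x} with hEdef
  have hE : E.Countable := countable_kinks f a b hd
  have hspec : ∀ t ∈ Ioo a b, t ∉ E → specDeriv f t = derivWithin f (Ici t) t := by
    intro t ht htE
    have : derivWithin f (Iic t) t = derivWithin f (Ici t) t := by
      by_contra hne
      exact htE ⟨ht, Ne.symm hne⟩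
    exact specDeriv_eq_of_eq this
  -- key estimate: for x < y in Ioo a b, with g = specDeriv f,
  -- g x * (y - x) ≤ f y - f x ≤ g y * (y - x)
  have keyB : ∀ x ∈ Ioo a b, ∀ y ∈ Ioo a b, x < y →
      specDeriv f x * (y - x) ≤ f y - f x := by
    intro x hx y hy hxy
    have hIcc : Icc x y ⊆ Ioo a b := fun t ht =>
      ⟨hx.1.trans_le ht.1, lt_of_le_of_lt ht.2 hy.2⟩
    rw [← sub_nonneg]
    have h0 : ∀ ε : ℝ, 0 < ε → specDeriv f x * (y - x) ≤ f y - f x + ε * (y - x) := by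
      intro ε hε
      set F : ℝ → ℝ := fun t => f t - (specDeriv f x - ε) * t with hF
      have hFc : ContinuousOn F (Icc x y) :=
        (hcont.mono hIcc).sub (continuous_const.mul continuous_id).continuousOn
      have hder : ∀ t ∈ Ico x y, t ∉ E →
          HasDerivWithinAt F (derivWithin f (Ici t) t - (specDeriv f x - ε)) (Ici t) t := by
        intro t ht htE
        have htIoo : t ∈ Ioo a b := hIcc ⟨ht.1, ht.2.le⟩
        have h1 := (hd t htIoo).1.hasDerivWithinAt
        have h2 : HasDerivWithinAt (fun t => (specDeriv f x - ε) * t)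
            ((specDeriv f x - ε) * 1) (Ici t) t := ((hasDerivAt_id t).const_mul _).hasDerivWithinAt
        have h3 := h1.sub h2
        rw [mul_one] at h3
        exact h3
      have hpos : ∀ t ∈ Ico x y, t ∉ E →
          0 < derivWithin f (Ici t) t - (specDeriv f x - ε) := by
        intro t ht htE
        have htIoo : t ∈ Ioo a b := hIcc ⟨ht.1, ht.2.le⟩
        have := hmono hx htIoo ht.1
        rw [hspec t htIoo htE] at this
        linarith
      have := mono_of_pos_right_deriv_off_countable hxy.le hFc hE hder hpos
      simp only [hF] at this
      nlinarith
    -- let ε → 0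
    rw [sub_nonneg]
    refine le_of_forall_pos_le_add fun ε hε => ?_
    have := h0 (ε / (y - x)) (div_pos hε (sub_pos.2 hxy))
    have hyx : (0:ℝ) < y - x := sub_pos.2 hxy
    calc specDeriv f x * (y - x) ≤ f y - f x + ε / (y - x) * (y - x) := this
      _ = f y - f x + ε := by field_simp
  have keyA : ∀ x ∈ Ioo a b, ∀ y ∈ Ioo a b, x < y →
      f y - f x ≤ specDeriv f y * (y - x) := by
    intro x hx y hy hxy
    have hIcc : Icc x y ⊆ Ioo a b := fun t ht =>
      ⟨hx.1.trans_le ht.1, lt_of_le_of_lt ht.2 hy.2⟩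
    have h0 : ∀ ε : ℝ, 0 < ε → f y - f x ≤ specDeriv f y * (y - x) + ε * (y - x) := by
      intro ε hε
      set F : ℝ → ℝ := fun t => (specDeriv f y + ε) * t - f t with hF
      have hFc : ContinuousOn F (Icc x y) :=
        (continuous_const.mul continuous_id).continuousOn.sub (hcont.mono hIcc)
      have hder : ∀ t ∈ Ico x y, t ∉ E →
          HasDerivWithinAt F ((specDeriv f y + ε) - derivWithin f (Ici t) t) (Ici t) t := by
        intro t ht htE
        have htIoo : t ∈ Ioo a b := hIcc ⟨ht.1, ht.2.le⟩
        have h1 := (hd t htIoo).1.hasDerivWithinAt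
        have h2 : HasDerivWithinAt (fun t => (specDeriv f y + ε) * t)
            ((specDeriv f y + ε) * 1) (Ici t) t := ((hasDerivAt_id t).const_mul _).hasDerivWithinAt
        have h3 := h2.sub h1
        rw [mul_one] at h3
        exact h3
      have hpos : ∀ t ∈ Ico x y, t ∉ E →
          0 < (specDeriv f y + ε) - derivWithin f (Ici t) t := by
        intro t ht htE
        have htIoo : t ∈ Ioo a b := hIcc ⟨ht.1, ht.2.le⟩
        have := hmono htIoo hy ht.2.le
        rw [hspec t htIoo htE] at this
        linarith
      have := mono_of_pos_right_deriv_off_countable hxy.le hFc hE hder hpos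
      simp only [hF] at this
      nlinarith
    refine le_of_forall_pos_le_add fun ε hε => ?_
    have hyx : (0:ℝ) < y - x := sub_pos.2 hxy
    have := h0 (ε / (y - x)) (div_pos hε hyx)
    calc f y - f x ≤ specDeriv f y * (y - x) + ε / (y - x) * (y - x) := this
      _ = specDeriv f y * (y - x) + ε := by field_simp
  refine convexOn_of_slope_mono_adjacent (convex_Ioo a b) ?_
  intro x y z hx hz hxy hyz
  have hy : y ∈ Ioo a b := ⟨hx.1.trans hxy, hyz.trans hz.2⟩
  have h1 := keyA x hx y hy hxy
  have h2 := keyB y hy z hz hyz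
  have hxy' : (0:ℝ) < y - x := sub_pos.2 hxy
  have hyz' : (0:ℝ) < z - y := sub_pos.2 hyz
  rw [div_le_div_iff₀ hxy' hyz']
  have e1 : (f y - f x) * (z - y) ≤ specDeriv f y * (y - x) * (z - y) := by nlinarith
  have e2 : specDeriv f y * (z - y) * (y - x) ≤ (f z - f y) * (y - x) := by nlinarith
  nlinarith


theorem convexOn_iff_specDeriv_monotoneOn (f : ℝ → ℝ) (a b : ℝ)
    (hcont : ContinuousOn f (Ioo a b)) :
    ConvexOn ℝ (Ioo a b) f ↔
      (∀ x ∈ Ioo a b, SpecularDifferentiableAt f x) ∧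
        MonotoneOn (specDeriv f) (Ioo a b) := by
  constructor
  · intro hcv
    exact ⟨fun x hx => hcv.specularDifferentiableAt hx, hcv.specDeriv_monotoneOn⟩
  · rintro ⟨hd, hmono⟩
    exact convexOn_of_specDeriv_monotoneOn f a b hcont hd hmono
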